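/- Let M₂ = diag(1/α², 1, 1/μ², 1) with α, μ > 0 and α ≠ μ. The set of 4×4 matrices A of the forms given by Aut(2A₂) satisfying AᵀM₂A = M₂ equals {diag(1, ε₁, 1, ε₂) : ε₁, ε₂ ∈ {±1}}, a group isomorphic to (ℤ/2)². -/

import Mathlib

open Matrix

/-- The automorphisms of 2A₂ (two allowed shapes). -/
def AutShape (A : Matrix (Fin 4) (Fin 4) ℝ) : Prop :=
  (∃ a₅ a₆ a₁₂ a₁₅ a₁₆ : ℝ,
      A = !![1, 0, 0, 0; a₅, a₆, 0, 0; 0, 0, 1, a₁₂; 0, 0, a₁₅, a₁₆]) ∨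
  (∃ a₇ a₈ a₁₃ a₁₄ : ℝ,
      A = !![0, 0, 1, 0; 0, 0, a₇, a₈; 1, 0, 0, 0; a₁₃, a₁₄, 0, 0])

def Dm (ε₁ ε₂ : ℝ) : Matrix (Fin 4) (Fin 4) ℝ :=
  !![1, 0, 0, 0; 0, ε₁, 0, 0; 0, 0, 1, 0; 0, 0, 0, ε₂]

lemma mem_iff (α μ : ℝ) (hα : 0 < α) (hμ : 0 < μ) (hαμ : α ≠ μ)
    (A : Matrix (Fin 4) (Fin 4) ℝ) :
    (AutShape A ∧
      Aᵀ * !![1/α^2, 0, 0, 0; 0, 1, 0, 0; 0, 0, 1/μ^2, 0; 0, 0, 0, (1:ℝ)] * A =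
        !![1/α^2, 0, 0, 0; 0, 1, 0, 0; 0, 0, 1/μ^2, 0; 0, 0, 0, (1:ℝ)]) ↔
    (∃ ε₁ ε₂ : ℝ, (ε₁ = 1 ∨ ε₁ = -1) ∧ (ε₂ = 1 ∨ ε₂ = -1) ∧ A = Dm ε₁ ε₂) := by
  constructor
  · rintro ⟨hs | hs, h⟩
    · obtain ⟨a₅, a₆, a₁₂, a₁₅, a₁₆, rfl⟩ := hs
      have ht : (!![1, 0, 0, 0; a₅, a₆, 0, 0; 0, 0, 1, a₁₂; 0, 0, a₁₅, a₁₆] : Matrix (Fin 4) (Fin 4) ℝ)ᵀ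
          = !![1, a₅, 0, 0; 0, a₆, 0, 0; 0, 0, 1, a₁₅; 0, 0, a₁₂, a₁₆] := by
        ext i j; fin_cases i <;> fin_cases j <;> rfl
      rw [ht] at h
      have h00 := congrFun (congrFun h 0) 0
      have h11 := congrFun (congrFun h 1) 1
      have h22 := congrFun (congrFun h 2) 2
      have h23 := congrFun (congrFun h 2) 3
      have h33 := congrFun (congrFun h 3) 3
      simp [Matrix.mul_apply, Fin.sum_univ_four] at h00 h11 h22 h23 h33
      have hμ2 : (μ:ℝ)^2 ≠ 0 := by positivity
      have h12 : a₁₂ = 0 := by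
        rw [h22] at h23
        field_simp at h23
        simpa using h23
      have h16 : a₁₆ * a₁₆ = 1 := by rw [h12] at h33; linarith
      refine ⟨a₆, a₁₆, mul_self_eq_one_iff.mp h11, mul_self_eq_one_iff.mp h16, ?_⟩
      rw [h00, h22, h12, Dm]
    · obtain ⟨a₇, a₈, a₁₃, a₁₄, rfl⟩ := hs
      exfalso
      have ht : (!![0, 0, 1, 0; 0, 0, a₇, a₈; 1, 0, 0, 0; a₁₃, a₁₄, 0, 0] : Matrix (Fin 4) (Fin 4) ℝ)ᵀ
          = !![0, 0, 1, a₁₃; 0, 0, 0, a₁₄; 1, a₇, 0, 0; 0, a₈, 0, 0] := by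
        ext i j; fin_cases i <;> fin_cases j <;> rfl
      rw [ht] at h
      have h00 := congrFun (congrFun h 0) 0
      have h22 := congrFun (congrFun h 2) 2
      simp [Matrix.mul_apply, Fin.sum_univ_four] at h00 h22
      have hα2 : (0:ℝ) < α^2 := by positivity
      have hμ2 : (0:ℝ) < μ^2 := by positivity
      have h1 : (α^2)⁻¹ = (μ^2)⁻¹ := by nlinarith [mul_self_nonneg a₁₃, mul_self_nonneg a₇]
      field_simp at h1
      exact hαμ ((pow_left_inj₀ hα.le hμ.le two_ne_zero).mp h1.symm)
  · rintro ⟨ε₁, ε₂, hε₁, hε₂, rfl⟩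
    constructor
    · exact Or.inl ⟨0, ε₁, 0, 0, ε₂, rfl⟩
    · have he1 : ε₁ * ε₁ = 1 := by rcases hε₁ with rfl | rfl <;> norm_num
      have he2 : ε₂ * ε₂ = 1 := by rcases hε₂ with rfl | rfl <;> norm_num
      have ht : (Dm ε₁ ε₂)ᵀ = Dm ε₁ ε₂ := by
        ext i j; fin_cases i <;> fin_cases j <;> rfl
      rw [ht]
      ext i j
      fin_cases i <;> fin_cases j <;>
        simp [Dm, Matrix.mul_apply, Fin.sum_univ_four, he1, he2, Matrix.vecHead, Matrix.vecTail]

lemma Dm_mul (x y z w : ℝ) : Dm x y * Dm z w = Dm (x*z) (y*w) := by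
  ext i j
  fin_cases i <;> fin_cases j <;>
    simp [Dm, Matrix.mul_apply, Fin.sum_univ_four, Matrix.vecHead, Matrix.vecTail]

lemma Dm11 (x y : ℝ) : Dm x y 1 1 = x := by simp [Dm]
lemma Dm33 (x y : ℝ) : Dm x y 3 3 = y := by simp [Dm]

noncomputable def sgn2 (x : ℝ) : Multiplicative (ZMod 2) :=
  Multiplicative.ofAdd (if x = 1 then (0 : ZMod 2) else 1)

lemma sgn2_one : sgn2 1 = Multiplicative.ofAdd (0 : ZMod 2) := by simp [sgn2]
lemma sgn2_negone : sgn2 (-1) = Multiplicative.ofAdd (1 : ZMod 2) := by norm_num [sgn2]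

lemma sgn2_inj {x y : ℝ} (hx : x = 1 ∨ x = -1) (hy : y = 1 ∨ y = -1)
    (h : sgn2 x = sgn2 y) : x = y := by
  rcases hx with rfl | rfl <;> rcases hy with rfl | rfl <;>
    simp_all [sgn2_one, sgn2_negone] <;> exact absurd h (by decide)

lemma sgn2_mul {x y : ℝ} (hx : x = 1 ∨ x = -1) (hy : y = 1 ∨ y = -1) :
    sgn2 (x * y) = sgn2 x * sgn2 y := by
  rcases hx with rfl | rfl <;> rcases hy with rfl | rfl <;>
    norm_num [sgn2_one, sgn2_negone] <;> decide

theorem isometric_automorphisms_M2_G2 (α μ : ℝ) (hα : 0 < α) (hμ : 0 < μ) (hαμ : α ≠ μ) :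
    ({A : Matrix (Fin 4) (Fin 4) ℝ |
        AutShape A ∧
        Aᵀ * !![1/α^2, 0, 0, 0; 0, 1, 0, 0; 0, 0, 1/μ^2, 0; 0, 0, 0, (1:ℝ)] * A =
          !![1/α^2, 0, 0, 0; 0, 1, 0, 0; 0, 0, 1/μ^2, 0; 0, 0, 0, (1:ℝ)]} =
      {A : Matrix (Fin 4) (Fin 4) ℝ | ∃ ε₁ ε₂ : ℝ,
        (ε₁ = 1 ∨ ε₁ = -1) ∧ (ε₂ = 1 ∨ ε₂ = -1) ∧
        A = !![1, 0, 0, 0; 0, ε₁, 0, 0; 0, 0, 1, 0; 0, 0, 0, ε₂]}) ∧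
    ∃ f : {A : Matrix (Fin 4) (Fin 4) ℝ //
        AutShape A ∧
        Aᵀ * !![1/α^2, 0, 0, 0; 0, 1, 0, 0; 0, 0, 1/μ^2, 0; 0, 0, 0, (1:ℝ)] * A =
          !![1/α^2, 0, 0, 0; 0, 1, 0, 0; 0, 0, 1/μ^2, 0; 0, 0, 0, (1:ℝ)]} →
      Multiplicative (ZMod 2) × Multiplicative (ZMod 2),
      Function.Bijective f ∧ ∀ a b, ∃ h, f ⟨a.1 * b.1, h⟩ = f a * f b := by
  constructor
  · exact Set.ext fun A => mem_iff α μ hα hμ hαμ A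
  · refine ⟨fun a => (sgn2 (a.1 1 1), sgn2 (a.1 3 3)), ⟨?_, ?_⟩, ?_⟩
    · -- injective
      rintro a b hab
      obtain ⟨ε₁, ε₂, hε₁, hε₂, ha⟩ := (mem_iff α μ hα hμ hαμ a.1).mp a.2
      obtain ⟨δ₁, δ₂, hδ₁, hδ₂, hb⟩ := (mem_iff α μ hα hμ hαμ b.1).mp b.2
      have h1 := congrArg Prod.fst hab
      have h2 := congrArg Prod.snd hab
      simp only [ha, hb, Dm11, Dm33] at h1 h2
      have e1 : ε₁ = δ₁ := sgn2_inj hε₁ hδ₁ h1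
      have e2 : ε₂ = δ₂ := sgn2_inj hε₂ hδ₂ h2
      exact Subtype.ext (by rw [ha, hb, e1, e2])
    · -- surjective
      rintro ⟨x, y⟩
      have hz : ∀ z : ZMod 2, z = 0 ∨ z = 1 := by decide
      set εx : ℝ := if Multiplicative.toAdd x = 0 then 1 else -1 with hεx
      set εy : ℝ := if Multiplicative.toAdd y = 0 then 1 else -1 with hεy
      have hεx' : εx = 1 ∨ εx = -1 := by unfold εx; split <;> simp
      have hεy' : εy = 1 ∨ εy = -1 := by unfold εy; split <;> simp
      refine ⟨⟨Dm εx εy, (mem_iff α μ hα hμ hαμ _).mpr ⟨εx, εy, hεx', hεy', rfl⟩⟩, ?_⟩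
      simp only [Dm11, Dm33]
      have key : ∀ z : Multiplicative (ZMod 2),
          sgn2 (if Multiplicative.toAdd z = 0 then 1 else -1) = z := by
        intro z
        rcases hz (Multiplicative.toAdd z) with h | h
        · rw [if_pos h, sgn2_one, ← h, ofAdd_toAdd]
        · rw [if_neg (by rw [h]; decide), sgn2_negone, ← h, ofAdd_toAdd]
      exact Prod.ext (key x) (key y)
    · -- homomorphism
      intro a b
      obtain ⟨ε₁, ε₂, hε₁, hε₂, ha⟩ := (mem_iff α μ hα hμ hαμ a.1).mp a.2
      obtain ⟨δ₁, δ₂, hδ₁, hδ₂, hb⟩ := (mem_iff α μ hα hμ hαμ b.1).mp b.2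
      have hmul : a.1 * b.1 = Dm (ε₁*δ₁) (ε₂*δ₂) := by rw [ha, hb, Dm_mul]
      have hmem : AutShape (a.1 * b.1) ∧ _ := (mem_iff α μ hα hμ hαμ (a.1*b.1)).mpr
        ⟨ε₁*δ₁, ε₂*δ₂, by rcases hε₁ with rfl | rfl <;> rcases hδ₁ with rfl | rfl <;> norm_num,
          by rcases hε₂ with rfl | rfl <;> rcases hδ₂ with rfl | rfl <;> norm_num, hmul⟩
      refine ⟨hmem, ?_⟩
      simp only [ha, hb, Dm_mul, Dm11, Dm33, Prod.mk_mul_mk]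
      exact Prod.ext (sgn2_mul hε₁ hδ₁) (sgn2_mul hε₂ hδ₂)
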